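/- arXiv:0705.1128 — 3 statements merged into one kernel-verified Lean document; each statement's English description precedes it below -/
import Mathlib

section
/- Let m : [0,∞) → ℝ be twice continuously differentiable with m(t) ≥ 0 and m'(t) ≤ 0 for all t ≥ 0, and suppose that the function t ↦ e^{2t}(m(t) + m'(t)) is nondecreasing on [0,∞). Then m'(t) → 0 as t → ∞. -/
open Filter Set

/-- If `g` is monotone on `Ici 0` and has derivative `G` within `Ici 0` at `t ∈ Ici 0`,
then `0 ≤ G`. -/
lemma deriv_nonneg_of_monotoneOn_Ici {g : ℝ → ℝ} {G t : ℝ}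
    (hm : MonotoneOn g (Set.Ici 0)) (ht : t ∈ Set.Ici (0:ℝ))
    (hd : HasDerivWithinAt g G (Set.Ici 0) t) : 0 ≤ G := by
  have hsub : Set.Ioi t ⊆ Set.Ici (0:ℝ) \ {t} := by
    intro y hy
    exact ⟨(le_trans ht (le_of_lt hy) : (0:ℝ) ≤ y), ne_of_gt hy⟩
  have htend : Tendsto (slope g t) (nhdsWithin t (Set.Ioi t)) (nhds G) :=
    ((hasDerivWithinAt_iff_tendsto_slope.1 hd).mono_left (nhdsWithin_mono t hsub))
  refine ge_of_tendsto htend ?_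
  filter_upwards [self_mem_nhdsWithin] with y hy
  have hty : t < y := hy
  have h0 : (0:ℝ) ≤ g y - g t := by
    have := hm ht (le_trans ht hty.le) hty.le
    linarith
  rw [slope_def_field]
  exact div_nonneg h0 (by linarith)

/-- If `m : [0,∞) → ℝ` is twice continuously differentiable with
`m(t) ≥ 0` and `m'(t) ≤ 0` for all `t ≥ 0`, and `t ↦ e^{2t}(m(t) + m'(t))` is
nondecreasing on `[0,∞)`, then `m'(t) → 0` as `t → ∞`. -/
theorem mass_deriv_tendsto_zero
    (m m' m'' : ℝ → ℝ)
    (hd1 : ∀ t ∈ Set.Ici (0:ℝ), HasDerivWithinAt m (m' t) (Set.Ici 0) t)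
    (hd2 : ∀ t ∈ Set.Ici (0:ℝ), HasDerivWithinAt m' (m'' t) (Set.Ici 0) t)
    (hcont : ContinuousOn m'' (Set.Ici 0))
    (hnonneg : ∀ t ∈ Set.Ici (0:ℝ), 0 ≤ m t)
    (hnonpos : ∀ t ∈ Set.Ici (0:ℝ), m' t ≤ 0)
    (hmono : MonotoneOn (fun t => Real.exp (2*t) * (m t + m' t)) (Set.Ici 0)) :
    Tendsto m' atTop (nhds 0) := by
  have hIoi : Set.Ioi (0:ℝ) ⊆ Set.Ici 0 := Set.Ioi_subset_Ici_self
  -- continuity of m and m'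
  have hmc : ContinuousOn m (Set.Ici 0) := fun t ht => (hd1 t ht).continuousWithinAt
  have hm'c : ContinuousOn m' (Set.Ici 0) := fun t ht => (hd2 t ht).continuousWithinAt
  -- m is antitone on Ici 0
  have hm_anti : AntitoneOn m (Set.Ici 0) := by
    apply antitoneOn_of_hasDerivWithinAt_nonpos (convex_Ici 0) hmc
    · intro x hx
      rw [interior_Ici] at hx ⊢
      exact (hd1 x (hIoi hx)).mono hIoi
    · intro x hx
      rw [interior_Ici] at hx
      exact hnonpos x (hIoi hx)
  -- constant C : lower bound -C on m''
  set C : ℝ := 2 * m 0 + 1 with hCdef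
  have hm0 : 0 ≤ m 0 := hnonneg 0 (Set.mem_Ici.2 le_rfl)
  have hC : 0 < C := by simp [hCdef]; linarith
  -- derivative of g := exp(2t)(m+m') is nonneg, giving m'' ≥ -C
  have hm'' : ∀ t ∈ Set.Ici (0:ℝ), -C ≤ m'' t := by
    intro t ht
    have hexp : HasDerivWithinAt (fun u : ℝ => Real.exp (2*u)) (Real.exp (2*t) * 2)
        (Set.Ici 0) t := (((hasDerivAt_id t).const_mul 2).exp.hasDerivWithinAt).congr_deriv
        (by simp)
    have hsum : HasDerivWithinAt (fun u => m u + m' u) (m' t + m'' t) (Set.Ici 0) t :=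
      (hd1 t ht).add (hd2 t ht)
    have hg : HasDerivWithinAt (fun u => Real.exp (2*u) * (m u + m' u))
        (Real.exp (2*t) * 2 * (m t + m' t) + Real.exp (2*t) * (m' t + m'' t))
        (Set.Ici 0) t := hexp.mul hsum
    have h0 : 0 ≤ Real.exp (2*t) * 2 * (m t + m' t) + Real.exp (2*t) * (m' t + m'' t) :=
      deriv_nonneg_of_monotoneOn_Ici hmono ht hg
    have hep : 0 < Real.exp (2*t) := Real.exp_pos _
    have h1 : 0 ≤ 2 * (m t + m' t) + (m' t + m'' t) := by
      nlinarith
    have h2 : m t ≤ m 0 := hm_anti (Set.mem_Ici.2 le_rfl) ht ht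
    have h3 : m' t ≤ 0 := hnonpos t ht
    simp only [hCdef]
    linarith
  -- m' u + C * u is monotone on Ici 0
  have hphi : MonotoneOn (fun u => m' u + C * u) (Set.Ici 0) := by
    apply monotoneOn_of_hasDerivWithinAt_nonneg (f' := fun u => m'' u + C) (convex_Ici 0)
    · exact hm'c.add (continuous_const.mul continuous_id).continuousOn
    · intro x hx
      rw [interior_Ici] at hx ⊢
      exact ((hd2 x (hIoi hx)).add ((hasDerivAt_id x).const_mul C).hasDerivWithinAt).mono hIoi
        |>.congr_deriv (by ring)
    · intro x hx
      rw [interior_Ici] at hx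
      have := hm'' x (hIoi hx)
      linarith
  -- m is "Cauchy" at infinity
  have hcauchy : ∀ η > (0:ℝ), ∃ T ≥ (0:ℝ), ∀ s t, T ≤ s → s ≤ t → m s - m t < η := by
    intro η hη
    set I : ℝ := sInf (m '' Set.Ici 0) with hIdef
    have hne : (m '' Set.Ici 0).Nonempty := ⟨m 0, 0, Set.mem_Ici.2 le_rfl, rfl⟩
    have hbdd : BddBelow (m '' Set.Ici 0) := by
      refine ⟨0, ?_⟩
      rintro y ⟨x, hx, rfl⟩
      exact hnonneg x hx
    obtain ⟨y, ⟨s₀, hs₀, rfl⟩, hy⟩ := exists_lt_of_csInf_lt hne (lt_add_of_pos_right I hη)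
    refine ⟨s₀, hs₀, fun s t hTs hst => ?_⟩
    have hs : s ∈ Set.Ici (0:ℝ) := le_trans hs₀ hTs
    have ht : t ∈ Set.Ici (0:ℝ) := le_trans hs hst
    have h1 : m s ≤ m s₀ := hm_anti hs₀ hs hTs
    have h2 : I ≤ m t := csInf_le hbdd ⟨t, ht, rfl⟩
    linarith
  -- main argument
  rw [Metric.tendsto_atTop]
  intro ε hε
  set δ : ℝ := ε / (2 * C) with hδdef
  have hδ : 0 < δ := by positivity
  obtain ⟨T, hT0, hT⟩ := hcauchy (ε * δ / 4) (by positivity)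
  refine ⟨T + δ, fun t htN => ?_⟩
  have ht0 : t ∈ Set.Ici (0:ℝ) := le_trans (by linarith) htN
  rw [Real.dist_eq, sub_zero, abs_lt]
  constructor
  · -- -ε < m' t
    by_contra h
    push_neg at h
    -- so m' t ≤ -ε
    set s : ℝ := t - δ with hsdef
    have hsT : T ≤ s := by simp [hsdef]; linarith
    have hs0 : s ∈ Set.Ici (0:ℝ) := le_trans hT0 hsT
    -- on [s,t], m' u ≤ -ε/2
    have hkey : ∀ u ∈ Set.Icc s t, m' u ≤ -(ε/2) := by
      intro u hu
      have hu0 : u ∈ Set.Ici (0:ℝ) := le_trans hs0 hu.1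
      have hmono' := hphi hu0 ht0 hu.2
      simp only at hmono'
      have hCδ : C * δ = ε / 2 := by
        field_simp [hδdef]
        rw [hδdef]; field_simp [hC.ne']
      have htu : t - u ≤ δ := by
        have := hu.1
        simp [hsdef] at this
        linarith
      have hprod : C * (t - u) ≤ C * δ := mul_le_mul_of_nonneg_left htu hC.le
      nlinarith
    -- hence m s - m t ≥ ε δ / 2
    have hst : s < t := by simp [hsdef]; linarith
    have hanti : AntitoneOn (fun u => m u + (ε/2) * u) (Set.Icc s t) := by
      apply antitoneOn_of_hasDerivWithinAt_nonpos (f' := fun u => m' u + ε/2) (convex_Icc s t)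
      · exact (hmc.mono (Set.Icc_subset_Ici_iff hst.le |>.2 hs0)).add
          (continuous_const.mul continuous_id).continuousOn
      · intro x hx
        rw [interior_Icc] at hx ⊢
        have hx0 : x ∈ Set.Ici (0:ℝ) := le_trans hs0 hx.1.le
        have hsub : Set.Ioo s t ⊆ Set.Ici (0:ℝ) := fun y hy => le_trans hs0 hy.1.le
        exact ((hd1 x hx0).add ((hasDerivAt_id x).const_mul (ε/2)).hasDerivWithinAt).mono hsub
          |>.congr_deriv (by ring)
      · intro x hx
        rw [interior_Icc] at hx
        have := hkey x (Set.Ioo_subset_Icc_self hx)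
        linarith
    have hdrop : m t + (ε/2) * t ≤ m s + (ε/2) * s :=
      hanti (Set.left_mem_Icc.2 hst.le) (Set.right_mem_Icc.2 hst.le) hst.le
    have hdrop' : ε * δ / 2 ≤ m s - m t := by
      have : t - s = δ := by simp [hsdef]
      nlinarith
    have hlt := hT s t hsT hst.le
    have hpos : 0 < ε * δ := by positivity
    linarith
  · exact lt_of_le_of_lt (hnonpos t ht0) hε
end

section
/- Let f : [0,∞) → ℝ be differentiable with f(t) ≥ 0 for all t ≥ 0, suppose f is (Lebesgue) integrable on [0,∞), and suppose there is a constant C such that f'(t) ≤ C for all t ≥ 0. Then f(t) → 0 as t → ∞. -/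
open Filter MeasureTheory

/-- A differentiable function `f : [0,∞) → ℝ` that is nonnegative,
Lebesgue integrable on `[0,∞)`, and has derivative bounded above by a constant `C`,
must tend to `0` at infinity. -/
theorem tendsto_zero_of_integrable_of_deriv_bounded
    (f f' : ℝ → ℝ) (C : ℝ)
    (hd : ∀ t ∈ Set.Ici (0:ℝ), HasDerivWithinAt f (f' t) (Set.Ici 0) t)
    (hnonneg : ∀ t ∈ Set.Ici (0:ℝ), 0 ≤ f t)
    (hint : IntegrableOn f (Set.Ici 0))
    (hC : ∀ t ∈ Set.Ici (0:ℝ), f' t ≤ C) :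
    Tendsto f atTop (nhds 0) := by
  set C' : ℝ := max C 1 with hC'def
  have hC'pos : (0:ℝ) < C' := lt_of_lt_of_le one_pos (le_max_right _ _)
  have hC' : ∀ t ∈ Set.Ici (0:ℝ), f' t ≤ C' := fun t ht => (hC t ht).trans (le_max_left _ _)
  -- continuity of f on Ici 0
  have hcont : ContinuousOn f (Set.Ici 0) := fun t ht => (hd t ht).continuousWithinAt
  -- g = C'*x - f x is monotone on Ici 0
  have hmono : MonotoneOn (fun x => C' * x - f x) (Set.Ici 0) := by
    apply monotoneOn_of_hasDerivWithinAt_nonneg (convex_Ici 0)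
      (f' := fun x => C' - f' x)
      ((continuousOn_const.mul continuousOn_id).sub hcont)
    · intro x hx
      rw [interior_Ici] at hx
      have h := ((hasDerivWithinAt_id x _).const_mul C').sub
        ((hd x (Set.mem_Ici.mpr (le_of_lt (Set.mem_Ioi.mp hx)))).mono interior_subset)
      simp only [mul_one] at h
      exact h
    · intro x hx
      rw [interior_Ici] at hx
      simpa using hC' x (Set.mem_Ici.mpr (le_of_lt (Set.mem_Ioi.mp hx)))
  -- key inequality
  have key : ∀ s t : ℝ, 0 ≤ s → s ≤ t → f t - C' * (t - s) ≤ f s := by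
    intro s t hs hst
    have := hmono hs (hs.trans hst) hst
    simp only at this
    linarith
  -- main argument by contradiction
  by_contra hne
  -- extract ε > 0 with frequently f t ≥ ε
  have : ∃ ε > 0, ∀ T : ℝ, ∃ t, T ≤ t ∧ ε ≤ f t := by
    rw [Metric.tendsto_atTop] at hne
    push_neg at hne
    obtain ⟨ε, hε, hfreq⟩ := hne
    refine ⟨ε, hε, fun T => ?_⟩
    obtain ⟨t, ht, hft⟩ := hfreq (max T 0)
    refine ⟨t, (le_max_left T 0).trans ht, ?_⟩
    have ht0 : (0:ℝ) ≤ t := (le_max_right T 0).trans ht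
    rw [Real.dist_eq, sub_zero, abs_of_nonneg (hnonneg t ht0)] at hft
    exact hft
  obtain ⟨ε, hε, hfreq⟩ := this
  set δ : ℝ := ε / (2 * C') with hδdef
  have hδpos : 0 < δ := div_pos hε (by positivity)
  -- on [t-δ, t] with t ≥ δ and f t ≥ ε, f ≥ ε/2
  have hlow : ∀ t, δ ≤ t → ε ≤ f t → ∀ s ∈ Set.Icc (t - δ) t, ε / 2 ≤ f s := by
    intro t hδt hft s hs
    have hs0 : 0 ≤ s := le_trans (by linarith [hs.1]) hs.1
    have := key s t hs0 hs.2
    have h1 : t - s ≤ δ := by linarith [hs.1]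
    have h2 : C' * (t - s) ≤ C' * δ := by nlinarith
    have h3 : C' * δ = ε / 2 := by
      rw [hδdef]; field_simp
    linarith
  -- induction: arbitrarily large partial integrals
  have hstep : ∀ n : ℕ, ∃ T : ℝ, 0 ≤ T ∧ (n : ℝ) * (δ * (ε / 2)) ≤ ∫ x in Set.Icc 0 T, f x := by
    intro n
    induction n with
    | zero => exact ⟨0, le_refl 0, by simp⟩
    | succ n ih =>
      obtain ⟨T, hT0, hTint⟩ := ih
      obtain ⟨t, ht, hft⟩ := hfreq (T + δ)
      have htδ : δ ≤ t := by linarith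
      have ht0 : 0 ≤ t := le_trans hδpos.le htδ
      refine ⟨t, ht0, ?_⟩
      have hsub1 : Set.Icc (0:ℝ) T ⊆ Set.Icc 0 t := Set.Icc_subset_Icc_right (by linarith)
      have hsub2 : Set.Icc (t - δ) t ⊆ Set.Icc 0 t := Set.Icc_subset_Icc_left (by linarith)
      have hia : IntegrableOn f (Set.Icc 0 t) :=
        hint.mono_set (Set.Icc_subset_Ici_self)
      -- split Icc 0 t = Icc 0 T ∪ Ioc T t
      have hsplit : ∫ x in Set.Icc 0 t, f x
          = (∫ x in Set.Icc 0 T, f x) + ∫ x in Set.Ioc T t, f x := by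
        rw [← setIntegral_union]
        · congr 1
          rw [Set.Icc_union_Ioc_eq_Icc hT0 (by linarith)]
        · exact Set.disjoint_left.mpr fun x hx1 hx2 => absurd hx2.1 (not_lt.2 hx1.2)
        · exact measurableSet_Ioc
        · exact hia.mono_set hsub1
        · exact hia.mono_set (Set.Ioc_subset_Icc_self.trans
            (Set.Icc_subset_Icc_left (by linarith)))
      have hIoc : δ * (ε / 2) ≤ ∫ x in Set.Ioc T t, f x := by
        have hsub3 : Set.Ioc (t - δ) t ⊆ Set.Ioc T t := Set.Ioc_subset_Ioc_left (by linarith)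
        have hiT : IntegrableOn f (Set.Ioc T t) :=
          hia.mono_set (Set.Ioc_subset_Icc_self.trans
            (Set.Icc_subset_Icc_left (by linarith)))
        have h1 : ∫ x in Set.Ioc (t - δ) t, f x ≤ ∫ x in Set.Ioc T t, f x := by
          apply setIntegral_mono_set hiT
          · filter_upwards [ae_restrict_mem measurableSet_Ioc] with x hx
            exact hnonneg x (le_of_lt (lt_of_le_of_lt hT0 hx.1))
          · exact Filter.Eventually.of_forall hsub3 |>.mono fun x h => h
        have h2 : ε / 2 * (volume (Set.Ioc (t - δ) t)).toReal
            ≤ ∫ x in Set.Ioc (t - δ) t, f x := by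
          apply setIntegral_ge_of_const_le_real measurableSet_Ioc
            (by simp)
            (fun x hx => hlow t htδ hft x (Set.Ioc_subset_Icc_self hx))
            (hiT.mono_set hsub3)
        rw [Real.volume_Ioc] at h2
        have : (ENNReal.ofReal (t - (t - δ))).toReal = δ := by
          rw [ENNReal.toReal_ofReal (by linarith)]; ring
        rw [this] at h2
        linarith
      rw [hsplit]
      push_cast
      linarith
  -- contradiction with finiteness of the integral
  have hbound : ∀ T : ℝ, 0 ≤ T → ∫ x in Set.Icc 0 T, f x ≤ ∫ x in Set.Ici (0:ℝ), f x := by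
    intro T hT
    apply setIntegral_mono_set hint
    · filter_upwards [ae_restrict_mem measurableSet_Ici] with x hx
      exact hnonneg x hx
    · exact Filter.Eventually.of_forall Set.Icc_subset_Ici_self |>.mono fun x h => h
  obtain ⟨n, hn⟩ := exists_nat_gt ((∫ x in Set.Ici (0:ℝ), f x) / (δ * (ε / 2)))
  obtain ⟨T, hT0, hTint⟩ := hstep n
  have hb : 0 < δ * (ε / 2) := by positivity
  have : (∫ x in Set.Ici (0:ℝ), f x) < (n : ℝ) * (δ * (ε / 2)) := by
    rwa [div_lt_iff₀ hb] at hn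
  linarith [hbound T hT0]
end

section
/- Let m ≥ 1 be an integer, and let c > 0 and R > 0. Let F : (0,R) → ℝ be nondecreasing with F(r) > 0 for every r ∈ (0,R), and suppose that for Lebesgue-almost every r ∈ (0,R), F is differentiable at r with F'(r) ≥ m·c·F(r)^{(m-1)/m}. Then F(r) ≥ (c·r)^m for every r ∈ (0,R). -/
open Filter MeasureTheory

/-- Core growth lemma for globally monotone functions: if `G` is monotone and a.e. on
`(a,b)` it has a derivative `≥ c`, then `c * (b - a) ≤ G b - G a`. -/
lemma monotone_growth_key {G : ℝ → ℝ} {a b c : ℝ} (hc : 0 ≤ c) (hab : a < b)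
    (hmono : Monotone G)
    (hd : ∀ᵐ x ∂(volume.restrict (Set.Ioo a b)), ∃ g, HasDerivAt G g x ∧ c ≤ g) :
    c * (b - a) ≤ G b - G a := by
  set μ := hmono.stieltjesFunction.measure with hμ
  -- a.e. on (a,b), the Radon-Nikodym derivative of μ is at least c
  have hDae : ∀ᵐ x ∂(volume.restrict (Set.Ioo a b)),
      ENNReal.ofReal c ≤ μ.rnDeriv volume x := by
    filter_upwards [hd, ae_restrict_of_ae hmono.ae_hasDerivAt,
      ae_restrict_of_ae (Measure.rnDeriv_lt_top μ volume)] with x hx hx' hlt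
    obtain ⟨g, hg, hcg⟩ := hx
    refine ENNReal.ofReal_le_of_le_toReal ?_
    exact le_of_le_of_eq hcg (hx'.unique hg).symm
  -- main step on compactly contained subintervals
  have main : ∀ a' ∈ Set.Ioo a b, ∀ b' ∈ Set.Ioo a' b, c * (b' - a') ≤ G b - G a := by
    intro a' ha' b' hb'
    have hsub : Set.Ioc a' b' ⊆ Set.Ioo a b := fun x hx =>
      ⟨ha'.1.trans hx.1, lt_of_le_of_lt hx.2 hb'.2⟩
    have h1 : ENNReal.ofReal (c * (b' - a')) ≤ ∫⁻ x in Set.Ioc a' b', μ.rnDeriv volume x := by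
      have hb'a' : (0:ℝ) ≤ b' - a' := by linarith [hb'.1]
      rw [ENNReal.ofReal_mul hc]
      calc ENNReal.ofReal c * ENNReal.ofReal (b' - a')
          = ∫⁻ _ in Set.Ioc a' b', ENNReal.ofReal c := by
            rw [MeasureTheory.setLIntegral_const, Real.volume_Ioc]
        _ ≤ ∫⁻ x in Set.Ioc a' b', μ.rnDeriv volume x := by
            refine lintegral_mono_ae ?_
            exact ae_restrict_of_ae_restrict_of_subset hsub hDae
    have h2 : (∫⁻ x in Set.Ioc a' b', μ.rnDeriv volume x) ≤ μ (Set.Ioc a' b') :=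
      Measure.setLIntegral_rnDeriv_le _
    have h3 : μ (Set.Ioc a' b') =
        ENNReal.ofReal (hmono.stieltjesFunction b' - hmono.stieltjesFunction a') :=
      StieltjesFunction.measure_Ioc _ _ _
    have hsb' : hmono.stieltjesFunction b' ≤ G b := by
      rw [hmono.stieltjesFunction_eq]
      exact hmono.rightLim_le hb'.2
    have hsa' : G a ≤ hmono.stieltjesFunction a' := by
      rw [hmono.stieltjesFunction_eq]
      exact (hmono ha'.1.le).trans (hmono.le_rightLim le_rfl)
    have h4 : c * (b' - a') ≤ hmono.stieltjesFunction b' - hmono.stieltjesFunction a' := by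
      have := (h1.trans h2).trans_eq h3
      have hmono' := hmono.stieltjesFunction.mono (le_of_lt hb'.1)
      exact (ENNReal.ofReal_le_ofReal_iff (by linarith)).1 this
    linarith
  -- limiting argument
  refine le_of_forall_pos_le_add ?_
  intro ε hε
  set δ : ℝ := min ((b - a) / 3) (ε / (2 * c + 1)) with hδdef
  have hδpos : 0 < δ := lt_min (by linarith) (by positivity)
  have hδ1 : δ ≤ (b - a) / 3 := min_le_left _ _
  have hδ2 : δ ≤ ε / (2 * c + 1) := min_le_right _ _
  have ha' : a + δ ∈ Set.Ioo a b := ⟨by linarith, by linarith⟩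
  have hb' : b - δ ∈ Set.Ioo (a + δ) b := ⟨by linarith, by linarith⟩
  have := main _ ha' _ hb'
  have hcδ : 2 * c * δ ≤ ε := by
    have : (2 * c + 1) * δ ≤ ε := by
      calc (2 * c + 1) * δ ≤ (2 * c + 1) * (ε / (2 * c + 1)) := by
            apply mul_le_mul_of_nonneg_left hδ2 (by positivity)
        _ = ε := by field_simp
    nlinarith
  nlinarith

/-- Version for `MonotoneOn` on a closed interval. -/
lemma monotoneOn_growth_key {G : ℝ → ℝ} {a b c : ℝ} (hc : 0 ≤ c) (hab : a < b)
    (hmono : MonotoneOn G (Set.Icc a b))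
    (hd : ∀ᵐ x ∂(volume.restrict (Set.Ioo a b)), ∃ g, HasDerivAt G g x ∧ c ≤ g) :
    c * (b - a) ≤ G b - G a := by
  set H : ℝ → ℝ := fun x => G (min (max x a) b) with hHdef
  have hmem : ∀ x : ℝ, min (max x a) b ∈ Set.Icc a b := fun x =>
    ⟨le_min (le_max_right x a) hab.le, min_le_right _ _⟩
  have hH : Monotone H := fun x y hxy =>
    hmono (hmem x) (hmem y) (min_le_min (max_le_max hxy le_rfl) le_rfl)
  have hHa : H a = G a := by simp [hHdef, max_self, min_eq_left hab.le]
  have hHb : H b = G b := by simp [hHdef, max_eq_left hab.le, min_self]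
  have hd' : ∀ᵐ x ∂(volume.restrict (Set.Ioo a b)), ∃ g, HasDerivAt H g x ∧ c ≤ g := by
    filter_upwards [hd, ae_restrict_mem measurableSet_Ioo] with x hx hxmem
    obtain ⟨g, hg, hcg⟩ := hx
    refine ⟨g, hg.congr_of_eventuallyEq ?_, hcg⟩
    filter_upwards [isOpen_Ioo.mem_nhds hxmem] with y hy
    simp [hHdef, max_eq_left hy.1.le, min_eq_left hy.2.le]
  have := monotone_growth_key hc hab hH hd'
  rwa [hHa, hHb] at this

/-- Let `m ≥ 1` be an integer, `c > 0`, `R > 0`.  If `F : (0,R) → ℝ` is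
nondecreasing and positive, and for Lebesgue-a.e. `r ∈ (0,R)` it is differentiable at
`r` with `F'(r) ≥ m·c·F(r)^((m-1)/m)`, then `F(r) ≥ (c·r)^m` for every `r ∈ (0,R)`. -/
theorem growth_from_differential_inequality
    (m : ℕ) (hm : 1 ≤ m) (c R : ℝ) (hc : 0 < c) (hR : 0 < R)
    (F : ℝ → ℝ)
    (hmono : MonotoneOn F (Set.Ioo 0 R))
    (hpos : ∀ r ∈ Set.Ioo (0:ℝ) R, 0 < F r)
    (hderiv : ∀ᵐ r ∂(volume.restrict (Set.Ioo (0:ℝ) R)),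
      ∃ d : ℝ, HasDerivAt F d r ∧ (m : ℝ) * c * (F r) ^ (((m : ℝ) - 1) / (m : ℝ)) ≤ d) :
    ∀ r ∈ Set.Ioo (0:ℝ) R, (c * r) ^ m ≤ F r := by
  intro r hr
  have hm0 : (0:ℝ) < (m : ℝ) := by exact_mod_cast hm
  set p : ℝ := 1 / (m : ℝ) with hpdef
  have hp0 : 0 < p := by positivity
  have hpm : p * (m : ℝ) = 1 := by rw [hpdef]; field_simp
  set G : ℝ → ℝ := fun x => F x ^ p with hGdef
  -- Step A: G grows at rate c on subintervals
  have stepA : ∀ s ∈ Set.Ioo (0:ℝ) r, c * (r - s) ≤ G r - G s := by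
    intro s hs
    have hIcc : Set.Icc s r ⊆ Set.Ioo 0 R := fun x hx =>
      ⟨lt_of_lt_of_le hs.1 hx.1, lt_of_le_of_lt hx.2 hr.2⟩
    have hGmono : MonotoneOn G (Set.Icc s r) := fun x hx y hy hxy =>
      Real.rpow_le_rpow (hpos x (hIcc hx)).le (hmono (hIcc hx) (hIcc hy) hxy) hp0.le
    refine monotoneOn_growth_key hc.le hs.2 hGmono ?_
    have hsub : Set.Ioo s r ⊆ Set.Ioo 0 R := fun x hx => hIcc ⟨hx.1.le, hx.2.le⟩
    filter_upwards [ae_restrict_of_ae_restrict_of_subset hsub hderiv,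
      ae_restrict_mem measurableSet_Ioo] with x hx hxmem
    obtain ⟨d, hd, hineq⟩ := hx
    have hA : 0 < F x := hpos x (hsub hxmem)
    have hrpow : HasDerivAt (fun y : ℝ => y ^ p) (p * F x ^ (p - 1)) (F x) :=
      Real.hasDerivAt_rpow_const (Or.inl hA.ne')
    refine ⟨p * F x ^ (p - 1) * d, hrpow.comp x hd, ?_⟩
    have e : F x ^ (p - 1) * F x ^ (((m:ℝ) - 1) / (m:ℝ)) = 1 := by
      rw [← Real.rpow_add hA]
      have : (p - 1) + ((m:ℝ) - 1) / (m:ℝ) = 0 := by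
        rw [hpdef]; field_simp; ring
      rw [this, Real.rpow_zero]
    have hpow_pos : 0 < p * F x ^ (p - 1) := by positivity
    have h5 : p * F x ^ (p - 1) * ((m:ℝ) * c * F x ^ (((m:ℝ) - 1) / (m:ℝ))) = c := by
      calc p * F x ^ (p - 1) * ((m:ℝ) * c * F x ^ (((m:ℝ) - 1) / (m:ℝ)))
          = (p * (m:ℝ)) * c * (F x ^ (p - 1) * F x ^ (((m:ℝ) - 1) / (m:ℝ))) := by ring
        _ = c := by rw [hpm, e]; ring
    calc c = p * F x ^ (p - 1) * ((m:ℝ) * c * F x ^ (((m:ℝ) - 1) / (m:ℝ))) := h5.symm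
      _ ≤ p * F x ^ (p - 1) * d := by
          exact mul_le_mul_of_nonneg_left hineq hpow_pos.le
  -- Step B: G r ≥ c * r
  have stepB : c * r ≤ G r := by
    refine le_of_forall_pos_le_add ?_
    intro ε hε
    set s : ℝ := min (r / 2) (ε / c) with hsdef
    have hs : s ∈ Set.Ioo (0:ℝ) r := ⟨lt_min (by linarith [hr.1]) (by positivity),
      lt_of_le_of_lt (min_le_left _ _) (by linarith [hr.1])⟩
    have hGs : 0 < G s := Real.rpow_pos_of_pos (hpos s ⟨hs.1, hs.2.trans hr.2⟩) p
    have hcs : c * s ≤ ε := by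
      calc c * s ≤ c * (ε / c) := mul_le_mul_of_nonneg_left (min_le_right _ _) hc.le
        _ = ε := by field_simp
    have := stepA s hs
    nlinarith
  -- Step C: conclude
  have hFr : 0 < F r := hpos r hr
  have hGr : G r ^ m = F r := by
    rw [hGdef, ← Real.rpow_natCast (F r ^ p) m, ← Real.rpow_mul hFr.le, hpm, Real.rpow_one]
  calc (c * r) ^ m ≤ G r ^ m := by
        apply pow_le_pow_left₀ (mul_nonneg hc.le hr.1.le) stepB
    _ = F r := hGr
end
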